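/- Let P(z) = Σ_{j=0}^n A_j z^j be a matrix polynomial with square complex matrix coefficients, A_n invertible, having at least three nonzero coefficient matrices, and let k be the smallest positive integer with A_{n-k} ≠ 0. Let ‖·‖ be a submultiplicative matrix norm satisfying ‖A_n^{-2}‖^{-1} = ‖A_n‖ ‖A_n^{-1}‖^{-1}, and assume A_n commutes with A_{n-k} and with A_{n-k-ℓ} (ℓ the smallest positive integer with A_{n-k-ℓ} ≠ 0). Define Q(z) = (A_n z^{2k} − A_{n-k} z^k + A_{n-k}^2 A_n^{-1}) P(z). Then ρ[Q] ≤ ρ[P]. -/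

import Mathlib

/-- Coefficients of the product of two matrix polynomials given by their
coefficient sequences (Cauchy product). -/
noncomputable def Qcoeff {m : ℕ} (T A : ℕ → Matrix (Fin m) (Fin m) ℂ) (j : ℕ) :
    Matrix (Fin m) (Fin m) ℂ :=
  ∑ i ∈ Finset.range (j + 1), T i * A (j - i)

/-- Coefficients of the multiplier `Aₙ z^{2k} - A_{n-k} z^k + A_{n-k}² Aₙ⁻¹`. -/
noncomputable def mult2 {m : ℕ} (A : ℕ → Matrix (Fin m) (Fin m) ℂ) (n k : ℕ) (i : ℕ) :
    Matrix (Fin m) (Fin m) ℂ :=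
  if i = 2 * k then A n else if i = k then -A (n - k)
    else if i = 0 then A (n - k) * A (n - k) * (A n)⁻¹ else 0

/-- Comparison lemma for Cauchy-type root equations. -/
lemma cauchy_root_compare (M : ℕ) (L : ℝ) (cf : ℕ → ℝ) (hc : ∀ j, 0 ≤ cf j)
    (hL : 0 < L) (x y : ℝ) (hx : 0 < x) (hy : 0 < y)
    (hxe : L * x ^ M = ∑ j ∈ Finset.range M, cf j * x ^ j)
    (hye : ∑ j ∈ Finset.range M, cf j * y ^ j ≤ L * y ^ M) : x ≤ y := by
  by_contra hxy
  push_neg at hxy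
  set r := y / x with hr
  have hr0 : 0 < r := div_pos hy hx
  have hr1 : r < 1 := (div_lt_one hx).mpr hxy
  have hxr : x * r = y := by rw [hr]; field_simp
  have hsum_pos : 0 < ∑ j ∈ Finset.range M, cf j * x ^ j := by
    rw [← hxe]; positivity
  obtain ⟨j0, hj0mem, hj0pos⟩ : ∃ j0 ∈ Finset.range M, 0 < cf j0 * x ^ j0 := by
    by_contra h
    push_neg at h
    exact absurd (Finset.sum_nonpos h) (not_le.mpr hsum_pos)
  have hlt : ∑ j ∈ Finset.range M, cf j * x ^ j * r ^ M
      < ∑ j ∈ Finset.range M, cf j * y ^ j := by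
    apply Finset.sum_lt_sum
    · intro j hj
      have hjM : j < M := Finset.mem_range.mp hj
      have h1 : r ^ M ≤ r ^ j := pow_le_pow_of_le_one hr0.le hr1.le hjM.le
      calc cf j * x ^ j * r ^ M ≤ cf j * x ^ j * r ^ j :=
            mul_le_mul_of_nonneg_left h1 (mul_nonneg (hc j) (pow_pos hx j).le)
        _ = cf j * y ^ j := by rw [mul_assoc, ← mul_pow, hxr]
    · refine ⟨j0, hj0mem, ?_⟩
      have hjM : j0 < M := Finset.mem_range.mp hj0mem
      have h1 : r ^ M < r ^ j0 := pow_lt_pow_right_of_lt_one₀ hr0 hr1 hjM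
      calc cf j0 * x ^ j0 * r ^ M < cf j0 * x ^ j0 * r ^ j0 :=
            mul_lt_mul_of_pos_left h1 hj0pos
        _ = cf j0 * y ^ j0 := by rw [mul_assoc, ← mul_pow, hxr]
  have heq : ∑ j ∈ Finset.range M, cf j * x ^ j * r ^ M = L * y ^ M := by
    rw [← Finset.sum_mul, ← hxe, mul_assoc, ← mul_pow, hxr]
  linarith

/-- Expansion of the coefficients of `Q`. -/
lemma Qcoeff_mult2_eq {m : ℕ} (A : ℕ → Matrix (Fin m) (Fin m) ℂ) (n k : ℕ) (hk : 0 < k)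
    (j : ℕ) :
    Qcoeff (mult2 A n k) A j =
      (if 2 * k ≤ j then A n * A (j - 2 * k) else 0)
      + (if k ≤ j then -(A (n - k) * A (j - k)) else 0)
      + (A (n - k) * A (n - k) * (A n)⁻¹) * A j := by
  unfold Qcoeff mult2
  have hcg : ∀ i ∈ Finset.range (j + 1),
      (if i = 2 * k then A n else if i = k then -A (n - k)
        else if i = 0 then A (n - k) * A (n - k) * (A n)⁻¹ else 0) * A (j - i)
      = (if i = 2 * k then A n * A (j - 2 * k) else 0)
        + (if i = k then -(A (n - k) * A (j - k)) else 0)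
        + (if i = 0 then (A (n - k) * A (n - k) * (A n)⁻¹) * A j else 0) := by
    intro i _
    by_cases h2 : i = 2 * k
    · rw [if_pos h2, if_pos h2, if_neg (show ¬i = k by omega),
        if_neg (show ¬i = 0 by omega), h2, add_zero, add_zero]
    · by_cases h1 : i = k
      · rw [if_neg h2, if_pos h1, if_neg h2, if_pos h1,
          if_neg (show ¬i = 0 by omega), h1, zero_add, add_zero, neg_mul]
      · by_cases h0 : i = 0
        · rw [if_neg h2, if_neg h1, if_pos h0, if_neg h2, if_neg h1, if_pos h0,
            h0, Nat.sub_zero, zero_add, zero_add]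
        · rw [if_neg h2, if_neg h1, if_neg h0, if_neg h2, if_neg h1, if_neg h0,
            zero_mul, add_zero, add_zero]
  rw [Finset.sum_congr rfl hcg, Finset.sum_add_distrib, Finset.sum_add_distrib,
    Finset.sum_ite_eq', Finset.sum_ite_eq', Finset.sum_ite_eq']
  simp only [Finset.mem_range, Nat.lt_succ_iff, Nat.zero_le, if_true]

set_option maxHeartbeats 1000000 in
/-- `ρ[(Aₙ z^{2k} - A_{n-k} z^k + A_{n-k}² Aₙ⁻¹) P(z)] ≤ ρ[P]` under the norm and
commutation assumptions of Theorem 2.1. -/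
theorem matrix_improved_cauchy_radius_Q2 {m : ℕ}
    (n : ℕ) (A : ℕ → Matrix (Fin m) (Fin m) ℂ)
    (hdeg : ∀ j, n < j → A j = 0) (hinv : IsUnit (A n))
    (k ℓ : ℕ) (hk : 0 < k) (hℓ : 0 < ℓ) (hkl : k + ℓ ≤ n)
    (hknz : A (n - k) ≠ 0) (hkmin : ∀ j, 0 < j → j < k → A (n - j) = 0)
    (hlnz : A (n - k - ℓ) ≠ 0) (hlmin : ∀ j, 0 < j → j < ℓ → A (n - k - j) = 0)
    (N : Matrix (Fin m) (Fin m) ℂ → ℝ)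
    (hN0 : ∀ M, N M = 0 ↔ M = 0)
    (hNsmul : ∀ (c : ℂ) M, N (c • M) = ‖c‖ * N M)
    (hNadd : ∀ M₁ M₂, N (M₁ + M₂) ≤ N M₁ + N M₂)
    (hNmul : ∀ M₁ M₂, N (M₁ * M₂) ≤ N M₁ * N M₂)
    (hNsq : (N ((A n)⁻¹ * (A n)⁻¹))⁻¹ = N (A n) * (N (A n)⁻¹)⁻¹)
    (hcomm1 : A n * A (n - k) = A (n - k) * A n)
    (hcomm2 : A n * A (n - k - ℓ) = A (n - k - ℓ) * A n)
    (x y : ℝ) (hx : 0 < x) (hy : 0 < y)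
    (hxroot : (N ((A n * A n))⁻¹)⁻¹ * x ^ (n + 2 * k)
      = ∑ j ∈ Finset.range (n + 2 * k), N (Qcoeff (mult2 A n k) A j) * x ^ j)
    (hyroot : (N (A n)⁻¹)⁻¹ * y ^ n = ∑ j ∈ Finset.range n, N (A j) * y ^ j) :
    x ≤ y := by
  classical
  have hkn : k < n := by omega
  -- basic facts about N
  have hN0' : N 0 = 0 := (hN0 0).mpr rfl
  have hNneg : ∀ M, N (-M) = N M := by
    intro M
    have h : (-M) = ((-1 : ℂ) • M) := by simp
    rw [h, hNsmul]; simp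
  have hNnonneg : ∀ M, 0 ≤ N M := by
    intro M
    have h := hNadd M (-M)
    rw [hNneg, add_neg_cancel, hN0'] at h
    linarith
  have hNpos : ∀ M, M ≠ 0 → 0 < N M := fun M h =>
    lt_of_le_of_ne (hNnonneg M) (fun e => h ((hN0 M).mp e.symm))
  -- nontriviality
  have hmpos : 0 < m := by
    rcases Nat.eq_zero_or_pos m with hm0 | h
    · exfalso; apply hknz; subst hm0; funext i j; exact i.elim0
    · exact h
  have hone : (1 : Matrix (Fin m) (Fin m) ℂ) ≠ 0 := by
    intro h
    have h2 := congrFun (congrFun h ⟨0, hmpos⟩) ⟨0, hmpos⟩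
    simp [Matrix.one_apply] at h2
  -- invertibility facts
  have hdet : IsUnit (A n).det := (Matrix.isUnit_iff_isUnit_det _).mp hinv
  have hAinv : A n * (A n)⁻¹ = 1 := Matrix.mul_nonsing_inv _ hdet
  have hAinv' : (A n)⁻¹ * A n = 1 := Matrix.nonsing_inv_mul _ hdet
  set a := N (A n) with ha
  set d := N ((A n)⁻¹) with hd
  set c := N (A (n - k)) with hc
  have hApos : 0 < a := hNpos _ (by
    intro h; rw [h, Matrix.zero_mul] at hAinv; exact hone hAinv.symm)
  have hdpos : 0 < d := hNpos _ (by
    intro h; rw [h, Matrix.mul_zero] at hAinv; exact hone hAinv.symm)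
  have hcnn : 0 ≤ c := hNnonneg _
  have honele : 1 ≤ N 1 := by
    have h1 : 0 < N 1 := hNpos _ hone
    have h2 := hNmul 1 1
    rw [one_mul] at h2
    nlinarith
  have had : 1 ≤ a * d := by
    refine le_trans honele ?_
    rw [← hAinv]
    have h := hNmul (A n) ((A n)⁻¹)
    rw [← ha, ← hd] at h
    exact h
  have hba : d⁻¹ ≤ a := by
    rw [inv_eq_one_div, div_le_iff₀ hdpos]; linarith
  -- the sum over range n and its pieces
  have hsum_n : ∑ t ∈ Finset.range n, N (A t) * y ^ t = d⁻¹ * y ^ n := hyroot.symm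
  have hico : ∑ t ∈ Finset.Ico (n - k) n, N (A t) * y ^ t = c * y ^ (n - k) := by
    have h := Finset.sum_eq_single_of_mem (s := Finset.Ico (n - k) n)
      (f := fun t => N (A t) * y ^ t) (n - k)
      (Finset.mem_Ico.mpr ⟨le_refl _, by omega⟩) ?_
    · simpa [← hc] using h
    · intro t ht hne
      have ht' := Finset.mem_Ico.mp ht
      have hAt : A t = 0 := by
        have h1 : t = n - (n - t) := by omega
        rw [h1]; exact hkmin (n - t) (by omega) (by omega)
      simp only [hAt, hN0', zero_mul]
  have hsplit1 : ∑ t ∈ Finset.range (n - k), N (A t) * y ^ t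
      = d⁻¹ * y ^ n - c * y ^ (n - k) := by
    have h := Finset.sum_Ico_consecutive (fun t => N (A t) * y ^ t)
      (Nat.zero_le (n - k)) (show n - k ≤ n by omega)
    simp only [← Finset.range_eq_Ico] at h
    rw [hico, hsum_n] at h
    linarith
  -- erased sum
  have herase : ∑ t ∈ Finset.range n, (if t = n - k then 0 else N (A t) * y ^ t)
      = d⁻¹ * y ^ n - c * y ^ (n - k) := by
    have h1 : ∀ t ∈ Finset.range n,
        (if t = n - k then (0:ℝ) else N (A t) * y ^ t)
        = N (A t) * y ^ t - (if t = n - k then N (A t) * y ^ t else 0) := by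
      intro t _
      by_cases h : t = n - k <;> simp [h]
    rw [Finset.sum_congr rfl h1, Finset.sum_sub_distrib, Finset.sum_ite_eq', hsum_n]
    rw [if_pos (Finset.mem_range.mpr (by omega : n - k < n)), ← hc]
  -- E sums
  have hE1 : ∑ j ∈ Finset.range (n + 2 * k),
      (if 2 * k ≤ j ∧ j ≠ n + k then a * N (A (j - 2 * k)) else 0) * y ^ j
      = a * y ^ (2 * k) * (d⁻¹ * y ^ n - c * y ^ (n - k)) := by
    rw [Finset.range_eq_Ico,
      ← Finset.sum_Ico_consecutive _ (Nat.zero_le (2 * k)) (by omega : 2 * k ≤ n + 2 * k)]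
    have hz : ∑ j ∈ Finset.Ico 0 (2 * k),
        (if 2 * k ≤ j ∧ j ≠ n + k then a * N (A (j - 2 * k)) else 0) * y ^ j = 0 := by
      apply Finset.sum_eq_zero
      intro j hj
      have hj' := Finset.mem_Ico.mp hj
      rw [if_neg (by omega), zero_mul]
    rw [hz, zero_add, Finset.sum_Ico_eq_sum_range]
    rw [show n + 2 * k - 2 * k = n from by omega]
    have h2 : ∀ t ∈ Finset.range n,
        (if 2 * k ≤ 2 * k + t ∧ 2 * k + t ≠ n + k then a * N (A (2 * k + t - 2 * k)) else 0)
          * y ^ (2 * k + t)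
        = a * y ^ (2 * k) * (if t = n - k then 0 else N (A t) * y ^ t) := by
      intro t _
      rw [show 2 * k + t - 2 * k = t from by omega]
      by_cases h : t = n - k
      · rw [if_neg (by omega), if_pos h]; ring
      · rw [if_pos (by omega), if_neg h, pow_add]; ring
    rw [Finset.sum_congr rfl h2, ← Finset.mul_sum, herase]
  have hE2 : ∑ j ∈ Finset.range (n + 2 * k),
      (if k ≤ j ∧ j < n then c * N (A (j - k)) else 0) * y ^ j
      = c * y ^ k * (d⁻¹ * y ^ n - c * y ^ (n - k)) := by
    rw [Finset.range_eq_Ico,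
      ← Finset.sum_Ico_consecutive _ (Nat.zero_le n) (by omega : n ≤ n + 2 * k)]
    have hz : ∑ j ∈ Finset.Ico n (n + 2 * k),
        (if k ≤ j ∧ j < n then c * N (A (j - k)) else 0) * y ^ j = 0 := by
      apply Finset.sum_eq_zero
      intro j hj
      have hj' := Finset.mem_Ico.mp hj
      rw [if_neg (by omega), zero_mul]
    rw [hz, add_zero,
      ← Finset.sum_Ico_consecutive _ (Nat.zero_le k) (by omega : k ≤ n)]
    have hz2 : ∑ j ∈ Finset.Ico 0 k,
        (if k ≤ j ∧ j < n then c * N (A (j - k)) else 0) * y ^ j = 0 := by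
      apply Finset.sum_eq_zero
      intro j hj
      have hj' := Finset.mem_Ico.mp hj
      rw [if_neg (by omega), zero_mul]
    rw [hz2, zero_add, Finset.sum_Ico_eq_sum_range]
    have h2 : ∀ t ∈ Finset.range (n - k),
        (if k ≤ k + t ∧ k + t < n then c * N (A (k + t - k)) else 0) * y ^ (k + t)
        = c * y ^ k * (N (A t) * y ^ t) := by
      intro t ht
      have ht' := Finset.mem_range.mp ht
      rw [show k + t - k = t from by omega, if_pos (by omega), pow_add]
      ring
    rw [Finset.sum_congr rfl h2, ← Finset.mul_sum, hsplit1]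
  have hE3 : ∑ j ∈ Finset.range (n + 2 * k),
      (if j < n then c * c * d * N (A j) else 0) * y ^ j
      = c * c * y ^ n := by
    rw [Finset.range_eq_Ico,
      ← Finset.sum_Ico_consecutive _ (Nat.zero_le n) (by omega : n ≤ n + 2 * k)]
    have hz : ∑ j ∈ Finset.Ico n (n + 2 * k),
        (if j < n then c * c * d * N (A j) else 0) * y ^ j = 0 := by
      apply Finset.sum_eq_zero
      intro j hj
      have hj' := Finset.mem_Ico.mp hj
      rw [if_neg (by omega), zero_mul]
    rw [hz, add_zero]
    have h2 : ∀ j ∈ Finset.Ico 0 n,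
        (if j < n then c * c * d * N (A j) else 0) * y ^ j
        = c * c * d * (N (A j) * y ^ j) := by
      intro j hj
      have hj' := Finset.mem_Ico.mp hj
      rw [if_pos (by omega)]
      ring
    rw [Finset.sum_congr rfl h2, ← Finset.mul_sum, ← Finset.range_eq_Ico, hsum_n,
      show c * c * d * (d⁻¹ * y ^ n) = c * c * (d * d⁻¹) * y ^ n from by ring,
      mul_inv_cancel₀ hdpos.ne', mul_one]
  -- termwise bound pieces
  have hX3 : ∀ j, N ((A (n - k) * A (n - k) * (A n)⁻¹) * A j) ≤ c * c * d * N (A j) := by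
    intro j
    have h2 := hNmul (A (n - k) * A (n - k)) ((A n)⁻¹)
    have h3 := hNmul (A (n - k)) (A (n - k))
    rw [← hd] at h2
    rw [← hc] at h3
    have h4 := hNnonneg (A j)
    have h5 := hNnonneg (A (n - k) * A (n - k))
    calc N ((A (n - k) * A (n - k) * (A n)⁻¹) * A j)
        ≤ N (A (n - k) * A (n - k) * (A n)⁻¹) * N (A j) := hNmul _ _
      _ ≤ c * c * d * N (A j) := by
          nlinarith [mul_le_mul_of_nonneg_right h2 h4,
            mul_le_mul_of_nonneg_right h3 (mul_nonneg hdpos.le h4)]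
  have hterm : ∀ j ∈ Finset.range (n + 2 * k),
      N (Qcoeff (mult2 A n k) A j) * y ^ j ≤
        ((if 2 * k ≤ j ∧ j ≠ n + k then a * N (A (j - 2 * k)) else 0)
        + (if k ≤ j ∧ j < n then c * N (A (j - k)) else 0)
        + (if j < n then c * c * d * N (A j) else 0)) * y ^ j := by
    intro j hj
    apply mul_le_mul_of_nonneg_right _ (pow_nonneg hy.le j)
    rw [Qcoeff_mult2_eq A n k hk j]
    rcases lt_trichotomy j n with hjn | hjn | hjn
    · -- j < n
      have hne : j ≠ n + k := by omega
      have ht1 := hNadd ((if 2 * k ≤ j then A n * A (j - 2 * k) else 0)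
        + (if k ≤ j then -(A (n - k) * A (j - k)) else 0))
        ((A (n - k) * A (n - k) * (A n)⁻¹) * A j)
      have ht2 := hNadd (if 2 * k ≤ j then A n * A (j - 2 * k) else 0)
        (if k ≤ j then -(A (n - k) * A (j - k)) else 0)
      have hb1 : N (if 2 * k ≤ j then A n * A (j - 2 * k) else 0)
          ≤ (if 2 * k ≤ j ∧ j ≠ n + k then a * N (A (j - 2 * k)) else 0) := by
        by_cases h : 2 * k ≤ j
        · rw [if_pos h, if_pos ⟨h, hne⟩]
          have hm1 := hNmul (A n) (A (j - 2 * k))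
          rw [← ha] at hm1
          exact hm1
        · rw [if_neg h, if_neg (by tauto), hN0']
      have hb2 : N (if k ≤ j then -(A (n - k) * A (j - k)) else 0)
          ≤ (if k ≤ j ∧ j < n then c * N (A (j - k)) else 0) := by
        by_cases h : k ≤ j
        · rw [if_pos h, if_pos ⟨h, hjn⟩, hNneg]
          have hm1 := hNmul (A (n - k)) (A (j - k))
          rw [← hc] at hm1
          exact hm1
        · rw [if_neg h, if_neg (by tauto), hN0']
      have hb3 := hX3 j
      rw [if_pos hjn]
      linarith
    · -- j = n
      subst hjn
      have hX23 : (if k ≤ j then -(A (j - k) * A (j - k)) else 0)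
          + (A (j - k) * A (j - k) * (A j)⁻¹) * A j = 0 := by
        rw [if_pos (by omega : k ≤ j), mul_assoc, hAinv', mul_one]
        exact neg_add_cancel _
      rw [add_assoc, hX23, add_zero,
        if_neg (by omega : ¬(k ≤ j ∧ j < j)), if_neg (lt_irrefl j), add_zero, add_zero]
      by_cases h : 2 * k ≤ j
      · rw [if_pos h, if_pos ⟨h, by omega⟩]
        have hm1 := hNmul (A j) (A (j - 2 * k))
        rw [← ha] at hm1
        exact hm1
      · rw [if_neg h, if_neg (by tauto), hN0']
    · -- n < j
      have hAj : A j = 0 := hdeg j hjn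
      have hX3z : (A (n - k) * A (n - k) * (A n)⁻¹) * A j = 0 := by
        rw [hAj, Matrix.mul_zero]
      rcases eq_or_ne j (n + k) with rfl | hne
      · -- j = n + k : full cancellation
        rw [if_pos (by omega : 2 * k ≤ n + k), if_pos (by omega : k ≤ n + k), hX3z, add_zero,
          show n + k - 2 * k = n - k from by omega,
          show n + k - k = n from by omega, hcomm1, add_neg_cancel, hN0',
          if_neg (show ¬(2 * k ≤ n + k ∧ n + k ≠ n + k) from by simp),
          if_neg (by omega : ¬(k ≤ n + k ∧ n + k < n)),
          if_neg (by omega : ¬(n + k < n)), add_zero, add_zero]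
      · -- n < j, j ≠ n + k
        have hX2z : (if k ≤ j then -(A (n - k) * A (j - k)) else 0) = 0 := by
          rw [if_pos (by omega : k ≤ j)]
          have hAjk : A (j - k) = 0 := by
            rcases lt_or_gt_of_ne hne with hlt | hgt
            · rw [show j - k = n - (n + k - j) from by omega]
              exact hkmin (n + k - j) (by omega) (by omega)
            · exact hdeg _ (by omega)
          rw [hAjk, Matrix.mul_zero, neg_zero]
        rw [hX2z, hX3z, add_zero, add_zero,
          if_neg (by omega : ¬(k ≤ j ∧ j < n)), if_neg (by omega : ¬(j < n)),
          add_zero, add_zero]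
        by_cases h : 2 * k ≤ j
        · rw [if_pos h, if_pos ⟨h, hne⟩]
          have hm1 := hNmul (A n) (A (j - 2 * k))
          rw [← ha] at hm1
          exact hm1
        · rw [if_neg h, if_neg (by tauto), hN0']
  -- assemble the bound at y
  have hSbound : ∑ j ∈ Finset.range (n + 2 * k), N (Qcoeff (mult2 A n k) A j) * y ^ j
      ≤ a * d⁻¹ * y ^ (n + 2 * k) := by
    have h1 := Finset.sum_le_sum hterm
    have h2 : ∑ j ∈ Finset.range (n + 2 * k),
        ((if 2 * k ≤ j ∧ j ≠ n + k then a * N (A (j - 2 * k)) else 0)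
        + (if k ≤ j ∧ j < n then c * N (A (j - k)) else 0)
        + (if j < n then c * c * d * N (A j) else 0)) * y ^ j
        = a * y ^ (2 * k) * (d⁻¹ * y ^ n - c * y ^ (n - k))
          + c * y ^ k * (d⁻¹ * y ^ n - c * y ^ (n - k))
          + c * c * y ^ n := by
      rw [← hE1, ← hE2, ← hE3, ← Finset.sum_add_distrib, ← Finset.sum_add_distrib]
      apply Finset.sum_congr rfl
      intro j _
      ring
    rw [h2] at h1
    have e1 : y ^ (2 * k) * y ^ n = y ^ (n + 2 * k) := by
      rw [← pow_add]; congr 1; omega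
    have e2 : y ^ (2 * k) * y ^ (n - k) = y ^ (n + k) := by
      rw [← pow_add]; congr 1; omega
    have e3 : y ^ k * y ^ n = y ^ (n + k) := by
      rw [← pow_add]; congr 1; omega
    have e4 : y ^ k * y ^ (n - k) = y ^ n := by
      rw [← pow_add]; congr 1; omega
    have hkey : a * y ^ (2 * k) * (d⁻¹ * y ^ n - c * y ^ (n - k))
          + c * y ^ k * (d⁻¹ * y ^ n - c * y ^ (n - k))
          + c * c * y ^ n
        = a * d⁻¹ * y ^ (n + 2 * k) + (d⁻¹ - a) * (c * y ^ (n + k)) := by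
      have hexp : a * y ^ (2 * k) * (d⁻¹ * y ^ n - c * y ^ (n - k))
          + c * y ^ k * (d⁻¹ * y ^ n - c * y ^ (n - k))
          + c * c * y ^ n
          = a * d⁻¹ * (y ^ (2 * k) * y ^ n) - a * c * (y ^ (2 * k) * y ^ (n - k))
            + c * d⁻¹ * (y ^ k * y ^ n) - c * c * (y ^ k * y ^ (n - k))
            + c * c * y ^ n := by ring
      rw [hexp, e1, e2, e3, e4]
      ring
    have h9 : d⁻¹ - a ≤ 0 := sub_nonpos.mpr hba
    have h10 : 0 ≤ c * y ^ (n + k) := mul_nonneg hcnn (pow_nonneg hy.le _)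
    have h11 : (d⁻¹ - a) * (c * y ^ (n + k)) ≤ 0 :=
      mul_nonpos_iff.mpr (Or.inr ⟨h9, h10⟩)
    refine h1.trans ?_
    rw [hkey]
    linarith only [h11]
  -- the leading coefficient of Q
  have hL : (N ((A n * A n))⁻¹)⁻¹ = a * d⁻¹ := by
    rw [Matrix.mul_inv_rev]
    exact hNsq
  have hLpos : 0 < a * d⁻¹ := mul_pos hApos (inv_pos.mpr hdpos)
  rw [hL] at hxroot
  exact cauchy_root_compare (n + 2 * k) (a * d⁻¹)
    (fun j => N (Qcoeff (mult2 A n k) A j)) (fun j => hNnonneg _)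
    hLpos x y hx hy hxroot hSbound
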